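/- arXiv:2304.06838 — 2 statements merged into one kernel-verified Lean document; each statement's English description precedes it below -/
import Mathlib

section
/- Assume the delay equation x'(t) = Σ_{j=0}^N A_j(t) x(t−r_j) is asymptotically hyperbolic and that Λ_L : W^{1,p}_μ → L^p_μ is bijective. For each s ∈ ℝ let F(s) = { φ ∈ C : there is a continuous bounded v : (−∞,s] → ℝⁿ with v_s = φ and v_t = T(t,τ)v_τ for all τ ≤ t ≤ s }. Then for every t ≥ s, the restriction of the solution operator T(t,s) to F(s) is a bijection from F(s) onto F(t). -/
open MeasureTheory Filter Topology Set
open scoped ENNReal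

noncomputable section

/-- The weighted measure `dμ = (1+t²)⁻¹ dt` on `ℝ`. -/
def muW : Measure ℝ := volume.withDensity fun t => ENNReal.ofReal ((1 + t ^ 2)⁻¹)

/-- Weighted `L^p` norm; for `p = ∞` it is the essential supremum of `‖f t‖ (1+t²)⁻¹`,
as in the paper. -/
def lpNormW {E : Type*} [NormedAddCommGroup E] (p : ℝ≥0∞) (f : ℝ → E) : ℝ≥0∞ :=
  if p = ∞ then essSup (fun t => (‖f t‖₊ : ℝ≥0∞) * ENNReal.ofReal ((1 + t ^ 2)⁻¹)) volume
  else (∫⁻ t, (‖f t‖₊ : ℝ≥0∞) ^ p.toReal ∂muW) ^ (1 / p.toReal)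

/-- Membership in the weighted space `L^p_μ`. -/
def MemLpW {E : Type*} [NormedAddCommGroup E] (p : ℝ≥0∞) (f : ℝ → E) : Prop :=
  AEStronglyMeasurable f volume ∧ lpNormW p f < ⊤

/-- `x` is locally absolutely continuous with (locally integrable) derivative `g`. -/
def HasACDeriv {E : Type*} [NormedAddCommGroup E] [NormedSpace ℝ E] (x g : ℝ → E) : Prop :=
  (∀ a b : ℝ, IntervalIntegrable g volume a b) ∧
  ∀ a t : ℝ, x t = x a + ∫ s in a..t, g s

/-- Membership in the weighted Sobolev space `W^{1,p}_μ`. -/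
def MemW1pW {E : Type*} [NormedAddCommGroup E] [NormedSpace ℝ E] (p : ℝ≥0∞) (x : ℝ → E) : Prop :=
  MemLpW p x ∧ ∃ g, HasACDeriv x g ∧ MemLpW p g

/-- The delays satisfy `0 = r₀ < r₁ < ⋯ < r_N`. -/
def DelaysOK {N : ℕ} (r : Fin (N + 1) → ℝ) : Prop := r 0 = 0 ∧ StrictMono r

/-- The coefficient matrices are measurable and uniformly bounded on `ℝ`. -/
def CoeffOK {n N : ℕ} (A : Fin (N + 1) → ℝ → Matrix (Fin n) (Fin n) ℝ) : Prop :=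
  (∀ j i k, Measurable fun t => A j t i k) ∧
  ∃ β : ℝ, ∀ (j : Fin (N + 1)) (t : ℝ) (v : Fin n → ℝ), ‖(A j t).mulVec v‖ ≤ β * ‖v‖

/-- Hyperbolicity of the autonomous system `x' = Σ A₀ⱼ x(·−rⱼ)`:
`det Δ(iz) ≠ 0` for all real `z`, where `Δ(s) = sI − Σ A₀ⱼ e^{−s rⱼ}`. -/
def IsHyperbolic {n N : ℕ} (r : Fin (N + 1) → ℝ)
    (A0 : Fin (N + 1) → Matrix (Fin n) (Fin n) ℝ) : Prop :=
  ∀ z : ℝ,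
    ((Complex.I * z) • (1 : Matrix (Fin n) (Fin n) ℂ)
      - ∑ j, Complex.exp (-(Complex.I * z) * (r j)) • (A0 j).map (fun a => (a : ℂ))).det ≠ 0

/-- The equation `x' = Σ Aⱼ(t) x(·−rⱼ)` is asymptotically hyperbolic. -/
def AsympHyperbolic {n N : ℕ} (r : Fin (N + 1) → ℝ)
    (A : Fin (N + 1) → ℝ → Matrix (Fin n) (Fin n) ℝ) : Prop :=
  ∃ Ap Am : Fin (N + 1) → Matrix (Fin n) (Fin n) ℝ,
    (∀ j i k, Tendsto (fun t => A j t i k) atTop (𝓝 (Ap j i k))) ∧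
    (∀ j i k, Tendsto (fun t => A j t i k) atBot (𝓝 (Am j i k))) ∧
    IsHyperbolic r Ap ∧ IsHyperbolic r Am

/-- `Λ_L x = h`, i.e. `x` is locally absolutely continuous with
`x'(t) = Σ Aⱼ(t) x(t−rⱼ) + h(t)` a.e. -/
def SolvesNH {n N : ℕ} (r : Fin (N + 1) → ℝ)
    (A : Fin (N + 1) → ℝ → Matrix (Fin n) (Fin n) ℝ) (x h : ℝ → Fin n → ℝ) : Prop :=
  HasACDeriv x fun t => (∑ j, (A j t).mulVec (x (t - r j))) + h t

/-- `x` is a solution of `x'(t) = Σ Aⱼ(t)x(t−rⱼ)` on `[s,∞)` (with history on `[s−r_N, s]`). -/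
def IsSolFrom {n N : ℕ} (r : Fin (N + 1) → ℝ)
    (A : Fin (N + 1) → ℝ → Matrix (Fin n) (Fin n) ℝ) (x : ℝ → Fin n → ℝ) (s : ℝ) : Prop :=
  ContinuousOn x (Ici (s - r (Fin.last N))) ∧
  (∀ t₁ t₂, s ≤ t₁ → s ≤ t₂ →
    IntervalIntegrable (fun τ => ∑ j, (A j τ).mulVec (x (τ - r j))) volume t₁ t₂) ∧
  ∀ t, s ≤ t → x t = x s + ∫ τ in s..t, ∑ j, (A j τ).mulVec (x (τ - r j))

/-- `v` is a solution of the equation on `(−∞, s]` (a backward continuation). -/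
def IsSolUpTo {n N : ℕ} (r : Fin (N + 1) → ℝ)
    (A : Fin (N + 1) → ℝ → Matrix (Fin n) (Fin n) ℝ) (v : ℝ → Fin n → ℝ) (s : ℝ) : Prop :=
  ContinuousOn v (Iic s) ∧
  (∀ t₁ t₂, t₁ ≤ s → t₂ ≤ s →
    IntervalIntegrable (fun τ => ∑ j, (A j τ).mulVec (v (τ - r j))) volume t₁ t₂) ∧
  ∀ τ t, τ ≤ t → t ≤ s → v t = v τ + ∫ σ in τ..t, ∑ j, (A j σ).mulVec (v (σ - r j))

/-- `xₛ = φ`: the segment of `x` at time `s` equals `φ ∈ C = C([−r_N,0],ℝⁿ)`. -/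
def Matches {n N : ℕ} (r : Fin (N + 1) → ℝ) (x : ℝ → Fin n → ℝ) (s : ℝ)
    (φ : C(Set.Icc (-(r (Fin.last N))) (0 : ℝ), Fin n → ℝ)) : Prop :=
  ∀ θ : Set.Icc (-(r (Fin.last N))) (0 : ℝ), x (s + (θ : ℝ)) = φ θ

/-- `E(s)`: initial data whose forward solution is bounded, i.e. `sup_{t ≥ s} ‖T(t,s)φ‖ < ∞`. -/
def Eset {n N : ℕ} (r : Fin (N + 1) → ℝ)
    (A : Fin (N + 1) → ℝ → Matrix (Fin n) (Fin n) ℝ) (s : ℝ) :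
    Set (C(Set.Icc (-(r (Fin.last N))) (0 : ℝ), Fin n → ℝ)) :=
  {φ | ∃ x, IsSolFrom r A x s ∧ Matches r x s φ ∧
      ∃ M, ∀ t, s - r (Fin.last N) ≤ t → ‖x t‖ ≤ M}

/-- `F(s)`: initial data with a bounded backward continuation `v` with `vₜ = T(t,τ)v_τ`. -/
def Fset {n N : ℕ} (r : Fin (N + 1) → ℝ)
    (A : Fin (N + 1) → ℝ → Matrix (Fin n) (Fin n) ℝ) (s : ℝ) :
    Set (C(Set.Icc (-(r (Fin.last N))) (0 : ℝ), Fin n → ℝ)) :=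
  {φ | ∃ v, IsSolUpTo r A v s ∧ Matches r v s φ ∧ ∃ M, ∀ t, t ≤ s → ‖v t‖ ≤ M}


namespace SP16

variable {n N : ℕ}

/-- The right-hand side `σ ↦ Σ_j A_j(σ) f(σ - r_j)`. -/
def RHSf (r : Fin (N + 1) → ℝ) (A : Fin (N + 1) → ℝ → Matrix (Fin n) (Fin n) ℝ)
    (f : ℝ → Fin n → ℝ) (σ : ℝ) : Fin n → ℝ :=
  ∑ j, (A j σ).mulVec (f (σ - r j))

theorem measurable_RHSf {r : Fin (N + 1) → ℝ} {A : Fin (N + 1) → ℝ → Matrix (Fin n) (Fin n) ℝ}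
    (hm : ∀ j i k, Measurable fun t => A j t i k)
    {f : ℝ → Fin n → ℝ} (hf : Measurable f) : Measurable (RHSf r A f) := by
  unfold RHSf
  refine measurable_pi_lambda _ fun i => ?_
  simp only [Finset.sum_apply, Matrix.mulVec, dotProduct]
  exact Finset.measurable_sum _ fun j _ => Finset.measurable_sum _ fun k _ =>
    (hm j i k).mul (((measurable_pi_apply k).comp hf).comp (measurable_sub_const (r j)))

theorem norm_RHSf_le {r : Fin (N + 1) → ℝ} {A : Fin (N + 1) → ℝ → Matrix (Fin n) (Fin n) ℝ}
    {β : ℝ} (hβ0 : 0 ≤ β) (hβ : ∀ j t v, ‖(A j t).mulVec v‖ ≤ β * ‖v‖)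
    {f : ℝ → Fin n → ℝ} {σ M : ℝ} (h : ∀ j, ‖f (σ - r j)‖ ≤ M) :
    ‖RHSf r A f σ‖ ≤ ((N : ℝ) + 1) * β * M := by
  calc ‖RHSf r A f σ‖ ≤ ∑ j, ‖(A j σ).mulVec (f (σ - r j))‖ := norm_sum_le _ _
    _ ≤ ∑ _j : Fin (N + 1), β * M :=
      Finset.sum_le_sum fun j _ =>
        (hβ j σ _).trans (mul_le_mul_of_nonneg_left (h j) hβ0)
    _ = ((N : ℝ) + 1) * β * M := by
      simp [Finset.sum_const, Finset.card_univ, nsmul_eq_mul]; push_cast; ring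

theorem RHSf_sub (r : Fin (N + 1) → ℝ) (A : Fin (N + 1) → ℝ → Matrix (Fin n) (Fin n) ℝ)
    (f g : ℝ → Fin n → ℝ) (σ : ℝ) :
    RHSf r A f σ - RHSf r A g σ = RHSf r A (fun τ => f τ - g τ) σ := by
  unfold RHSf
  rw [← Finset.sum_sub_distrib]
  exact Finset.sum_congr rfl fun j _ => (Matrix.mulVec_sub _ _ _).symm

theorem intervalIntegrable_RHSf {r : Fin (N + 1) → ℝ}
    {A : Fin (N + 1) → ℝ → Matrix (Fin n) (Fin n) ℝ} {β : ℝ}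
    (hm : ∀ j i k, Measurable fun t => A j t i k)
    (hβ0 : 0 ≤ β) (hβ : ∀ j t v, ‖(A j t).mulVec v‖ ≤ β * ‖v‖)
    (hr0 : ∀ j, 0 ≤ r j) (hrN : ∀ j, r j ≤ r (Fin.last N))
    {f : ℝ → Fin n → ℝ} (hf : Continuous f) (a b : ℝ) :
    IntervalIntegrable (RHSf r A f) volume a b := by
  obtain ⟨Mf, hMf⟩ := (isCompact_Icc (a := min a b - r (Fin.last N)) (b := max a b)
    ).exists_bound_of_continuousOn hf.continuousOn
  rw [intervalIntegrable_iff]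
  refine Integrable.mono' (g := fun _ => ((N : ℝ) + 1) * β * Mf)
    ((integrableOn_const_iff).mpr (Or.inr measure_Ioc_lt_top))
    ((measurable_RHSf hm hf.measurable).aestronglyMeasurable.restrict) ?_
  refine (ae_restrict_mem measurableSet_uIoc).mono fun σ hσ => ?_
  rw [Set.uIoc] at hσ
  refine norm_RHSf_le hβ0 hβ fun j => hMf _ ?_
  constructor
  · have := hrN j; have := hσ.1; linarith
  · have := hr0 j; have := hσ.2; linarith

theorem muW_univ_lt_top : muW Set.univ < ⊤ := by
  have h := integrable_inv_one_add_sq.hasFiniteIntegral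
  rw [muW, withDensity_apply _ MeasurableSet.univ, Measure.restrict_univ]
  rw [HasFiniteIntegral] at h
  have heq : ∀ t : ℝ, ENNReal.ofReal ((1 + t ^ 2)⁻¹) = (‖(1 + t ^ 2)⁻¹‖₊ : ℝ≥0∞) := by
    intro t
    rw [← enorm_eq_nnnorm, ← ofReal_norm, Real.norm_of_nonneg]
    positivity
  simp only [heq, ← enorm_eq_nnnorm]; exact h

theorem memLpW_of_bounded {p : ℝ≥0∞} (hp : 1 ≤ p) {f : ℝ → Fin n → ℝ} {M : ℝ}
    (hmeas : AEStronglyMeasurable f volume) (hM : ∀ τ, ‖f τ‖ ≤ M) : MemLpW p f := by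
  refine ⟨hmeas, ?_⟩
  have hMf : ∀ τ, (‖f τ‖₊ : ℝ≥0∞) ≤ ENNReal.ofReal M := fun τ => by
    rw [← enorm_eq_nnnorm, ← ofReal_norm]
    exact ENNReal.ofReal_le_ofReal (hM τ)
  rw [lpNormW]
  split_ifs with hptop
  · refine lt_of_le_of_lt (essSup_le_of_ae_le (ENNReal.ofReal M) (Filter.Eventually.of_forall
      fun τ => ?_)) ENNReal.ofReal_lt_top
    calc (‖f τ‖₊ : ℝ≥0∞) * ENNReal.ofReal ((1 + τ ^ 2)⁻¹)
        ≤ ENNReal.ofReal M * 1 := by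
          refine mul_le_mul' (hMf τ) ?_
          rw [← ENNReal.ofReal_one]
          refine ENNReal.ofReal_le_ofReal ?_
          rw [inv_le_one_iff₀]; right; nlinarith [sq_nonneg τ]
      _ = ENNReal.ofReal M := mul_one _
  · have hq0 : 0 ≤ p.toReal := ENNReal.toReal_nonneg
    have hbound : (∫⁻ t, (‖f t‖₊ : ℝ≥0∞) ^ p.toReal ∂muW)
        ≤ (ENNReal.ofReal M) ^ p.toReal * muW Set.univ := by
      calc (∫⁻ t, (‖f t‖₊ : ℝ≥0∞) ^ p.toReal ∂muW)
          ≤ ∫⁻ _, (ENNReal.ofReal M) ^ p.toReal ∂muW :=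
            lintegral_mono fun τ => ENNReal.rpow_le_rpow (hMf τ) hq0
        _ = (ENNReal.ofReal M) ^ p.toReal * muW Set.univ := by
            rw [lintegral_const]
    have hfin : (∫⁻ t, (‖f t‖₊ : ℝ≥0∞) ^ p.toReal ∂muW) < ⊤ :=
      lt_of_le_of_lt hbound (ENNReal.mul_lt_top
        (ENNReal.rpow_lt_top_of_nonneg hq0 ENNReal.ofReal_ne_top) muW_univ_lt_top)
    exact ENNReal.rpow_lt_top_of_nonneg (by positivity) hfin.ne

end SP16

namespace SP16
open scoped NNReal

theorem exists_step {n N : ℕ} {r : Fin (N + 1) → ℝ}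
    {A : Fin (N + 1) → ℝ → Matrix (Fin n) (Fin n) ℝ} {β : ℝ}
    (hm : ∀ j i k, Measurable fun t => A j t i k)
    (hβ0 : 0 ≤ β) (hβ : ∀ j t v, ‖(A j t).mulVec v‖ ≤ β * ‖v‖)
    (hr0 : ∀ j, 0 ≤ r j) (hrN : ∀ j, r j ≤ r (Fin.last N))
    {δ : ℝ} (hδ : 0 < δ) (hsmall : 2 * (((N : ℝ) + 1) * β) * δ ≤ 1 / 2)
    (a : ℝ) (H : ℝ → Fin n → ℝ) (hH : Continuous H) (MH : ℝ) (hMH : ∀ τ, ‖H τ‖ ≤ MH) :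
    ∃ x : ℝ → Fin n → ℝ, Continuous x ∧ (∃ M, ∀ τ, ‖x τ‖ ≤ M) ∧
      (∀ τ, τ ≤ a → x τ = H τ) ∧ (∀ τ, a + δ ≤ τ → x τ = x (a + δ)) ∧
      ∀ τ, a ≤ τ → τ ≤ a + δ → x τ = x a + ∫ σ in a..τ, RHSf r A x σ := by
  set b := a + δ with hb
  have hab : a ≤ b := by rw [hb]; linarith
  have haPt : a ∈ Set.Icc a b := ⟨le_refl a, hab⟩
  set Y := C(Set.Icc a b, Fin n → ℝ) with hY
  haveI : Nonempty (Set.Icc a b) := ⟨⟨a, haPt⟩⟩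
  set E : Y → ℝ → Fin n → ℝ :=
    fun y τ => H (min τ a) + (y (Set.projIcc a b hab τ) - y ⟨a, haPt⟩) with hE
  have hEcont : ∀ y, Continuous (E y) := fun y =>
    (hH.comp (continuous_id.min continuous_const)).add
      ((y.continuous.comp continuous_projIcc).sub continuous_const)
  have hEbd : ∀ y : Y, ∀ τ, ‖E y τ‖ ≤ MH + 2 * ‖y‖ := by
    intro y τ
    calc ‖E y τ‖ ≤ ‖H (min τ a)‖ + ‖y (Set.projIcc a b hab τ) - y ⟨a, haPt⟩‖ := norm_add_le _ _
      _ ≤ MH + (‖y (Set.projIcc a b hab τ)‖ + ‖y ⟨a, haPt⟩‖) :=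
          add_le_add (hMH _) (norm_sub_le _ _)
      _ ≤ MH + (‖y‖ + ‖y‖) := by
          have h1 := y.norm_coe_le_norm (Set.projIcc a b hab τ)
          have h2 := y.norm_coe_le_norm ⟨a, haPt⟩
          linarith
      _ = MH + 2 * ‖y‖ := by ring
  have hEdiff : ∀ y y' : Y, ∀ τ, ‖E y τ - E y' τ‖ ≤ 2 * dist y y' := by
    intro y y' τ
    have : E y τ - E y' τ =
        (y (Set.projIcc a b hab τ) - y' (Set.projIcc a b hab τ))
          - (y ⟨a, haPt⟩ - y' ⟨a, haPt⟩) := by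
      simp only [hE]; abel
    rw [this]
    have h1 : ‖y (Set.projIcc a b hab τ) - y' (Set.projIcc a b hab τ)‖ ≤ dist y y' := by
      rw [← dist_eq_norm]; exact y.dist_apply_le_dist _
    have h2 : ‖y ⟨a, haPt⟩ - y' ⟨a, haPt⟩‖ ≤ dist y y' := by
      rw [← dist_eq_norm]; exact y.dist_apply_le_dist _
    calc _ ≤ ‖y (Set.projIcc a b hab τ) - y' (Set.projIcc a b hab τ)‖
            + ‖y ⟨a, haPt⟩ - y' ⟨a, haPt⟩‖ := norm_sub_le _ _
      _ ≤ 2 * dist y y' := by linarith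
  have hInt : ∀ y : Y, ∀ c d : ℝ, IntervalIntegrable (RHSf r A (E y)) volume c d :=
    fun y c d => intervalIntegrable_RHSf hm hβ0 hβ hr0 hrN (hEcont y) c d
  set Φ : Y → Y := fun y =>
    ⟨fun τ => H a + ∫ σ in a..(τ : ℝ), RHSf r A (E y) σ,
      continuous_const.add
        ((intervalIntegral.continuous_primitive (hInt y) a).comp continuous_subtype_val)⟩
    with hΦ
  have hΦapp : ∀ (y : Y) (τ : Set.Icc a b),
      Φ y τ = H a + ∫ σ in a..(τ : ℝ), RHSf r A (E y) σ := fun y τ => rfl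
  have hlip : LipschitzWith (1 / 2 : ℝ≥0) Φ := by
    refine LipschitzWith.of_dist_le_mul fun y y' => ?_
    have hco : ((1 / 2 : ℝ≥0) : ℝ) = 1 / 2 := by norm_num
    rw [hco]
    have hKd : (0 : ℝ) ≤ (1 / 2 : ℝ) * dist y y' := by positivity
    rw [ContinuousMap.dist_le hKd]
    intro τ
    rw [dist_eq_norm, hΦapp, hΦapp]
    have hsub : (H a + ∫ σ in a..(τ : ℝ), RHSf r A (E y) σ)
        - (H a + ∫ σ in a..(τ : ℝ), RHSf r A (E y') σ)
        = ∫ σ in a..(τ : ℝ), (RHSf r A (E y) σ - RHSf r A (E y') σ) := by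
      rw [intervalIntegral.integral_sub (hInt y a τ) (hInt y' a τ)]; abel
    rw [hsub]
    have hbd : ∀ σ ∈ Set.uIoc a (τ : ℝ),
        ‖RHSf r A (E y) σ - RHSf r A (E y') σ‖ ≤ ((N : ℝ) + 1) * β * (2 * dist y y') := by
      intro σ _
      rw [RHSf_sub]
      exact norm_RHSf_le hβ0 hβ fun j => hEdiff y y' _
    have := intervalIntegral.norm_integral_le_of_norm_le_const hbd
    have habs : |(τ : ℝ) - a| ≤ δ := by
      rw [abs_of_nonneg (by linarith [τ.2.1])]
      have h2 : (τ : ℝ) ≤ a + δ := le_of_le_of_eq τ.2.2 hb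
      linarith
    have hCd : (0 : ℝ) ≤ ((N : ℝ) + 1) * β * (2 * dist y y') := by positivity
    calc ‖∫ σ in a..(τ : ℝ), (RHSf r A (E y) σ - RHSf r A (E y') σ)‖
        ≤ ((N : ℝ) + 1) * β * (2 * dist y y') * |(τ : ℝ) - a| := this
      _ ≤ ((N : ℝ) + 1) * β * (2 * dist y y') * δ :=
          mul_le_mul_of_nonneg_left habs hCd
      _ ≤ (1 / 2 : ℝ) * dist y y' := by
          nlinarith [dist_nonneg (x := y) (y := y'), hsmall]
  have hc : ContractingWith (1 / 2 : ℝ≥0) Φ := ⟨by rw [← NNReal.coe_lt_coe]; norm_num, hlip⟩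
  set y := ContractingWith.fixedPoint Φ hc with hy
  have hfix : Φ y = y := hc.fixedPoint_isFixedPt
  have hya : y ⟨a, haPt⟩ = H a := by
    have h1 := DFunLike.congr_fun hfix ⟨a, haPt⟩
    rw [hΦapp] at h1
    rw [← h1, intervalIntegral.integral_same, add_zero]
  refine ⟨E y, hEcont y, ⟨MH + 2 * ‖y‖, hEbd y⟩, ?_, ?_, ?_⟩
  · intro τ hτ
    simp only [hE]
    rw [min_eq_left hτ, Set.projIcc_of_le_left _ hτ, sub_self, add_zero]
  · have hEright : ∀ τ, b ≤ τ → E y τ = H a + (y ⟨b, ⟨hab, le_refl b⟩⟩ - y ⟨a, haPt⟩) := by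
      intro τ hτ
      simp only [hE]
      rw [min_eq_right (le_trans hab hτ), Set.projIcc_of_right_le _ hτ]
    intro τ hτ
    rw [hEright τ hτ, hEright (a + δ) (le_of_eq hb)]
  · intro τ hτ1 hτ2
    have hmem : τ ∈ Set.Icc a b := ⟨hτ1, hτ2⟩
    have hEa : E y a = H a := by
      simp only [hE]
      rw [min_self, Set.projIcc_of_le_left _ (le_refl a), sub_self, add_zero]
    have hEτ : E y τ = y ⟨τ, hmem⟩ := by
      simp only [hE]
      rw [min_eq_right hτ1, Set.projIcc_of_mem hab hmem, hya]
      abel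
    have h1 := DFunLike.congr_fun hfix ⟨τ, hmem⟩
    rw [hΦapp] at h1
    rw [hEτ, hEa, ← h1]
end SP16

namespace SP16

theorem RHSf_congr {n N : ℕ} {r : Fin (N + 1) → ℝ}
    {A : Fin (N + 1) → ℝ → Matrix (Fin n) (Fin n) ℝ} {f g : ℝ → Fin n → ℝ} {σ : ℝ}
    (h : ∀ j, f (σ - r j) = g (σ - r j)) : RHSf r A f σ = RHSf r A g σ :=
  Finset.sum_congr rfl fun j _ => by rw [h j]

/-- Invariant for the step-by-step construction of the forward solution. -/
def Inv {n N : ℕ} (r : Fin (N + 1) → ℝ) (A : Fin (N + 1) → ℝ → Matrix (Fin n) (Fin n) ℝ)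
    (H : ℝ → Fin n → ℝ) (t0 δ : ℝ) (k : ℕ) (x : ℝ → Fin n → ℝ) : Prop :=
  Continuous x ∧ (∃ M, ∀ τ, ‖x τ‖ ≤ M) ∧ (∀ τ, τ ≤ t0 → x τ = H τ) ∧
  (∀ τ, t0 + (k : ℝ) * δ ≤ τ → x τ = x (t0 + (k : ℝ) * δ)) ∧
  ∀ τ, t0 ≤ τ → τ ≤ t0 + (k : ℝ) * δ → x τ = x t0 + ∫ σ in t0..τ, RHSf r A x σ

theorem Inv_step {n N : ℕ} {r : Fin (N + 1) → ℝ}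
    {A : Fin (N + 1) → ℝ → Matrix (Fin n) (Fin n) ℝ} {β : ℝ}
    (hm : ∀ j i k, Measurable fun t => A j t i k)
    (hβ0 : 0 ≤ β) (hβ : ∀ j t v, ‖(A j t).mulVec v‖ ≤ β * ‖v‖)
    (hr0 : ∀ j, 0 ≤ r j) (hrN : ∀ j, r j ≤ r (Fin.last N))
    {δ : ℝ} (hδ : 0 < δ) (hsmall : 2 * (((N : ℝ) + 1) * β) * δ ≤ 1 / 2)
    {H : ℝ → Fin n → ℝ} {t0 : ℝ} (k : ℕ) (x : ℝ → Fin n → ℝ)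
    (hx : Inv r A H t0 δ k x) :
    ∃ x', Inv r A H t0 δ (k + 1) x' ∧ ∀ τ, τ ≤ t0 + (k : ℝ) * δ → x' τ = x τ := by
  obtain ⟨hc, ⟨M, hM⟩, hH0, hconst, hid⟩ := hx
  set a := t0 + (k : ℝ) * δ with ha
  have hkd : (0 : ℝ) ≤ (k : ℝ) * δ := by positivity
  have ht0a : t0 ≤ a := by rw [ha]; linarith
  obtain ⟨x', hx'c, hx'b, hx'past, hx'const, hx'id⟩ :=
    exists_step hm hβ0 hβ hr0 hrN hδ hsmall a x hc M hM
  have hsucc : t0 + (((k + 1 : ℕ)) : ℝ) * δ = a + δ := by push_cast; rw [ha]; ring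
  have hcongr : ∀ σ, σ ≤ a → RHSf r A x' σ = RHSf r A x σ := by
    intro σ hσ
    refine RHSf_congr fun j => hx'past _ ?_
    have := hr0 j; linarith
  have hIntx' : ∀ c d : ℝ, IntervalIntegrable (RHSf r A x') volume c d :=
    intervalIntegrable_RHSf hm hβ0 hβ hr0 hrN hx'c
  have hxt0 : x' t0 = x t0 := hx'past t0 ht0a
  have hkey : ∀ τ, t0 ≤ τ → τ ≤ a → x' τ = x' t0 + ∫ σ in t0..τ, RHSf r A x' σ := by
    intro τ hτ1 hτ2
    rw [hx'past τ hτ2, hxt0, hid τ hτ1 hτ2]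
    congr 1
    refine (intervalIntegral.integral_congr fun σ hσ => ?_).symm
    rw [Set.uIcc_of_le hτ1] at hσ
    exact hcongr σ (le_trans hσ.2 hτ2)
  refine ⟨x', ⟨hx'c, hx'b, fun τ hτ => by rw [hx'past τ (le_trans hτ ht0a)]; exact hH0 τ hτ,
    ?_, ?_⟩, hx'past⟩
  · intro τ hτ
    rw [hsucc] at hτ ⊢
    rw [hx'const τ hτ, hx'const (a + δ) (le_refl _)]
  · intro τ hτ1 hτ2
    rw [hsucc] at hτ2
    rcases le_total τ a with hcase | hcase
    · exact hkey τ hτ1 hcase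
    · have h1 : x' τ = x' a + ∫ σ in a..τ, RHSf r A x' σ := hx'id τ hcase hτ2
      have h2 : x' a = x' t0 + ∫ σ in t0..a, RHSf r A x' σ := hkey a ht0a (le_refl a)
      rw [h1, h2, add_assoc,
        intervalIntegral.integral_add_adjacent_intervals (hIntx' t0 a) (hIntx' a τ)]

theorem exists_forward {n N : ℕ} {r : Fin (N + 1) → ℝ}
    {A : Fin (N + 1) → ℝ → Matrix (Fin n) (Fin n) ℝ} {β : ℝ}
    (hm : ∀ j i k, Measurable fun t => A j t i k)
    (hβ0 : 0 ≤ β) (hβ : ∀ j t v, ‖(A j t).mulVec v‖ ≤ β * ‖v‖)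
    (hr0 : ∀ j, 0 ≤ r j) (hrN : ∀ j, r j ≤ r (Fin.last N))
    (H : ℝ → Fin n → ℝ) (hH : Continuous H) (MH : ℝ) (hMH : ∀ τ, ‖H τ‖ ≤ MH) (t0 : ℝ) :
    ∃ x : ℝ → Fin n → ℝ, Continuous x ∧ (∀ τ, τ ≤ t0 → x τ = H τ) ∧
      ∀ τ, t0 ≤ τ → x τ = x t0 + ∫ σ in t0..τ, RHSf r A x σ := by
  set C := ((N : ℝ) + 1) * β with hC
  have hC0 : 0 ≤ C := by positivity
  set δ := (4 * (C + 1))⁻¹ with hδdef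
  have hδ : 0 < δ := by rw [hδdef]; positivity
  have hsmall : 2 * C * δ ≤ 1 / 2 := by
    rw [hδdef, show 2 * C * (4 * (C + 1))⁻¹ = (2 * C) / (4 * (C + 1)) by ring,
      div_le_iff₀ (by positivity)]
    linarith
  -- base function
  set x0 : ℝ → Fin n → ℝ := fun τ => H (min τ t0) with hx0def
  have hx0 : Inv r A H t0 δ 0 x0 := by
    refine ⟨hH.comp (continuous_id.min continuous_const), ⟨MH, fun τ => hMH _⟩,
      fun τ hτ => by rw [hx0def]; simp [min_eq_left hτ], ?_, ?_⟩
    · intro τ hτ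
      simp only [Nat.cast_zero, zero_mul, add_zero] at hτ ⊢
      rw [hx0def]
      simp [min_eq_right hτ, min_self]
    · intro τ hτ1 hτ2
      simp only [Nat.cast_zero, zero_mul, add_zero] at hτ2
      have : τ = t0 := le_antisymm hτ2 hτ1
      rw [this, intervalIntegral.integral_same, add_zero]
  let seq : ∀ k : ℕ, {x : ℝ → Fin n → ℝ // Inv r A H t0 δ k x} := fun k =>
    Nat.rec (motive := fun k => {x : ℝ → Fin n → ℝ // Inv r A H t0 δ k x})
      ⟨x0, hx0⟩
      (fun k p => ⟨(Inv_step hm hβ0 hβ hr0 hrN hδ hsmall k p.1 p.2).choose,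
        (Inv_step hm hβ0 hβ hr0 hrN hδ hsmall k p.1 p.2).choose_spec.1⟩) k
  have hcoh : ∀ k : ℕ, ∀ τ, τ ≤ t0 + (k : ℝ) * δ → (seq (k + 1)).1 τ = (seq k).1 τ :=
    fun k => (Inv_step hm hβ0 hβ hr0 hrN hδ hsmall k (seq k).1 (seq k).2).choose_spec.2
  have hchain : ∀ k m : ℕ, k ≤ m → ∀ τ, τ ≤ t0 + (k : ℝ) * δ → (seq m).1 τ = (seq k).1 τ := by
    intro k m hkm
    induction m with
    | zero =>
      intro τ _
      have : k = 0 := Nat.le_zero.mp hkm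
      subst this; rfl
    | succ m ih =>
      rcases Nat.lt_or_ge k (m + 1) with hlt | hge
      · have hkm' : k ≤ m := Nat.lt_succ_iff.mp hlt
        intro τ hτ
        have hbound : τ ≤ t0 + (m : ℝ) * δ := by
          have : (k : ℝ) * δ ≤ (m : ℝ) * δ :=
            mul_le_mul_of_nonneg_right (Nat.cast_le.mpr hkm') hδ.le
          linarith
        rw [hcoh m τ hbound]
        exact ih hkm' τ hτ
      · have : k = m + 1 := le_antisymm hkm hge
        subst this
        intro τ _; rfl
  set x : ℝ → Fin n → ℝ := fun τ => (seq (Nat.ceil ((τ - t0) / δ))).1 τ with hxdef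
  have hceil : ∀ τ : ℝ, τ ≤ t0 + (Nat.ceil ((τ - t0) / δ) : ℝ) * δ := by
    intro τ
    rcases le_total τ t0 with h | h
    · have : (0 : ℝ) ≤ (Nat.ceil ((τ - t0) / δ) : ℝ) * δ := by positivity
      linarith
    · have h1 := Nat.le_ceil ((τ - t0) / δ)
      have h2 : τ - t0 ≤ (Nat.ceil ((τ - t0) / δ) : ℝ) * δ := by
        rw [← div_le_iff₀ hδ] at *
        exact h1
      linarith
  have hx : ∀ (k : ℕ) (τ : ℝ), τ ≤ t0 + (k : ℝ) * δ → x τ = (seq k).1 τ := by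
    intro k τ hτ
    rcases le_total k (Nat.ceil ((τ - t0) / δ)) with h | h
    · exact hchain k _ h τ hτ
    · exact (hchain _ k h τ (hceil τ)).symm
  have hxcont : Continuous x := by
    rw [continuous_iff_continuousAt]
    intro τ
    obtain ⟨k, hk⟩ := exists_nat_gt ((τ - t0) / δ)
    have hτk : τ < t0 + (k : ℝ) * δ := by
      have := (div_lt_iff₀ hδ).mp hk
      linarith
    have hev : x =ᶠ[nhds τ] (seq k).1 := by
      filter_upwards [Iio_mem_nhds hτk] with σ hσ
      exact hx k σ (le_of_lt hσ)
    exact ContinuousAt.congr ((seq k).2.1.continuousAt) hev.symm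
  refine ⟨x, hxcont, ?_, ?_⟩
  · intro τ hτ
    have h0 : x τ = (seq 0).1 τ := hx 0 τ (by simpa using hτ)
    have h1 : (seq 0).1 = x0 := rfl
    rw [h0, h1, hx0def]
    simp [min_eq_left hτ]
  · intro τ hτ
    obtain ⟨k, hk⟩ := exists_nat_gt ((τ - t0) / δ)
    have hτk : τ ≤ t0 + (k : ℝ) * δ := by
      have := (div_lt_iff₀ hδ).mp hk
      linarith
    have hid := (seq k).2.2.2.2.2 τ hτ hτk
    rw [hx k τ hτk, hx k t0 (by nlinarith [mul_nonneg (Nat.cast_nonneg k) hδ.le]), hid]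
    congr 1
    refine (intervalIntegral.integral_congr fun σ hσ => ?_)
    rw [Set.uIcc_of_le hτ] at hσ
    refine RHSf_congr fun j => (hx k _ ?_).symm
    have := hr0 j
    have := hσ.2
    linarith
end SP16

namespace SP16

theorem glue {n N : ℕ} {r : Fin (N + 1) → ℝ}
    {A : Fin (N + 1) → ℝ → Matrix (Fin n) (Fin n) ℝ} {β : ℝ}
    (hm : ∀ j i k, Measurable fun t => A j t i k)
    (hβ0 : 0 ≤ β) (hβ : ∀ j t v, ‖(A j t).mulVec v‖ ≤ β * ‖v‖)
    (hr0 : ∀ j, 0 ≤ r j) (hrN : ∀ j, r j ≤ r (Fin.last N))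
    {s t : ℝ} (hst : s ≤ t)
    {v x : ℝ → Fin n → ℝ} {φ : C(Set.Icc (-(r (Fin.last N))) (0 : ℝ), Fin n → ℝ)}
    (hv : IsSolUpTo r A v s) (hvφ : Matches r v s φ) {Mv : ℝ}
    (hMv : ∀ τ, τ ≤ s → ‖v τ‖ ≤ Mv)
    (hx : IsSolFrom r A x s) (hxφ : Matches r x s φ) :
    ∃ V : ℝ → Fin n → ℝ, Continuous V ∧ (∃ M, ∀ τ, ‖V τ‖ ≤ M) ∧
      (∀ τ, τ ≤ s → V τ = v τ) ∧
      (∀ τ, s - r (Fin.last N) ≤ τ → τ ≤ t → V τ = x τ) ∧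
      (∀ τ, t ≤ τ → V τ = x t) ∧
      (∀ a b, a ≤ b → b ≤ t → V b = V a + ∫ σ in a..b, RHSf r A V σ) := by
  have hrN0 : 0 ≤ r (Fin.last N) := hr0 _
  have hagree : ∀ τ, s - r (Fin.last N) ≤ τ → τ ≤ s → v τ = x τ := by
    intro τ h1 h2
    have hmem : τ - s ∈ Set.Icc (-(r (Fin.last N))) (0 : ℝ) := ⟨by linarith, by linarith⟩
    have h3 := hvφ ⟨τ - s, hmem⟩
    have h4 := hxφ ⟨τ - s, hmem⟩
    rw [show s + (τ - s) = τ by ring] at h3 h4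
    rw [h3, h4]
  set V : ℝ → Fin n → ℝ :=
    fun τ => if τ ≤ s then v (min τ s) else x (max s (min τ t)) with hVdef
  have hf1 : Continuous fun τ => v (min τ s) :=
    hv.1.comp_continuous (continuous_id.min continuous_const) fun τ => min_le_right τ s
  have hf2 : Continuous fun τ => x (max s (min τ t)) := by
    refine hx.1.comp_continuous (continuous_const.max (continuous_id.min continuous_const))
      fun τ => ?_
    have : s ≤ max s (min τ t) := le_max_left _ _
    simp only [Set.mem_Ici]
    linarith
  have hVc : Continuous V := by
    refine Continuous.if_le hf1 hf2 continuous_id continuous_const fun τ hτ => ?_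
    rw [hτ, min_self, min_eq_left hst, max_self]
    exact hagree s (by linarith) (le_refl s)
  have hVpast : ∀ τ, τ ≤ s → V τ = v τ := by
    intro τ hτ
    rw [hVdef]
    simp only [if_pos hτ, min_eq_left hτ]
  have hVmid : ∀ τ, s - r (Fin.last N) ≤ τ → τ ≤ t → V τ = x τ := by
    intro τ h1 h2
    rw [hVdef]
    rcases le_or_gt τ s with h | h
    · simp only [if_pos h, min_eq_left h]
      exact hagree τ h1 h
    · simp only [if_neg (not_le.mpr h)]
      rw [min_eq_left h2, max_eq_right h.le]
  have hVright : ∀ τ, t ≤ τ → V τ = x t := by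
    intro τ hτ
    rw [hVdef]
    rcases le_or_gt τ s with h | h
    · have h1 : τ = s := le_antisymm h (le_trans hst hτ)
      have h2 : s = t := le_antisymm hst (le_trans hτ h)
      simp only [if_pos h, min_eq_left h]
      rw [h1, ← h2]
      exact hagree s (by linarith) (le_refl s)
    · simp only [if_neg (not_le.mpr h)]
      rw [min_eq_right hτ, max_eq_right hst]
  have hbdd : ∃ M, ∀ τ, ‖V τ‖ ≤ M := by
    obtain ⟨Mx, hMx⟩ := (isCompact_Icc (a := s) (b := t)).exists_bound_of_continuousOn
      (hx.1.mono fun σ hσ => by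
        simp only [Set.mem_Ici]
        have := hσ.1
        linarith)
    refine ⟨max Mv Mx, fun τ => ?_⟩
    rw [hVdef]
    rcases le_or_gt τ s with h | h
    · simp only [if_pos h, min_eq_left h]
      exact le_trans (hMv τ h) (le_max_left _ _)
    · simp only [if_neg (not_le.mpr h)]
      refine le_trans (hMx _ ⟨le_max_left _ _, ?_⟩) (le_max_right _ _)
      exact max_le hst (min_le_right _ _)
  have hVint : ∀ a b : ℝ, IntervalIntegrable (RHSf r A V) volume a b :=
    intervalIntegrable_RHSf hm hβ0 hβ hr0 hrN hVc
  have hEqv : ∀ σ, σ ≤ s → RHSf r A V σ = RHSf r A v σ := by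
    intro σ hσ
    refine RHSf_congr fun j => hVpast _ ?_
    have := hr0 j; linarith
  have hEqx : ∀ σ, s ≤ σ → σ ≤ t → RHSf r A V σ = RHSf r A x σ := by
    intro σ h1 h2
    refine RHSf_congr fun j => hVmid _ ?_ ?_
    · have := hrN j; linarith
    · have := hr0 j; linarith
  have hvid : ∀ τ t', τ ≤ t' → t' ≤ s → v t' = v τ + ∫ σ in τ..t', RHSf r A v σ := hv.2.2
  have hxint : ∀ t₁ t₂, s ≤ t₁ → s ≤ t₂ → IntervalIntegrable (RHSf r A x) volume t₁ t₂ :=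
    hx.2.1
  have hxid : ∀ τ, s ≤ τ → x τ = x s + ∫ σ in s..τ, RHSf r A x σ := hx.2.2
  have key1 : ∀ a b, a ≤ b → b ≤ s → V b = V a + ∫ σ in a..b, RHSf r A V σ := by
    intro a b hab hbs
    rw [hVpast b hbs, hVpast a (le_trans hab hbs), hvid a b hab hbs]
    congr 1
    refine (intervalIntegral.integral_congr fun σ hσ => ?_).symm
    rw [Set.uIcc_of_le hab] at hσ
    exact hEqv σ (le_trans hσ.2 hbs)
  have key2 : ∀ a b, s ≤ a → a ≤ b → b ≤ t → V b = V a + ∫ σ in a..b, RHSf r A V σ := by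
    intro a b hsa hab hbt
    have hsb : s ≤ b := le_trans hsa hab
    rw [hVmid b (by linarith) hbt, hVmid a (by linarith) (le_trans hab hbt)]
    have hxb := hxid b hsb
    have hxa := hxid a hsa
    have hsub := intervalIntegral.integral_interval_sub_left
      (hxint s b (le_refl s) hsb) (hxint s a (le_refl s) hsa)
    have : x b = x a + ∫ σ in a..b, RHSf r A x σ := by
      rw [hxb, hxa, ← hsub]; abel
    rw [this]
    congr 1
    refine (intervalIntegral.integral_congr fun σ hσ => ?_).symm
    rw [Set.uIcc_of_le hab] at hσ
    exact hEqx σ (le_trans hsa hσ.1) (le_trans hσ.2 hbt)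
  refine ⟨V, hVc, hbdd, hVpast, hVmid, hVright, ?_⟩
  intro a b hab hbt
  rcases le_total b s with hbs | hsb
  · exact key1 a b hab hbs
  · rcases le_total a s with has | hsa
    · have h1 : V s = V a + ∫ σ in a..s, RHSf r A V σ := key1 a s has (le_refl s)
      have h2 : V b = V s + ∫ σ in s..b, RHSf r A V σ := key2 s b (le_refl s) hsb hbt
      rw [h2, h1, add_assoc,
        intervalIntegral.integral_add_adjacent_intervals (hVint a s) (hVint s b)]
    · exact key2 a b hsa hab hbt
end SP16

open SP16

/-- If the equation is asymptotically hyperbolic and `Λ_L` is bijective, then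
for `t ≥ s` the solution operator `T(t,s)` restricted to `F(s)` is a bijection onto `F(t)`. -/
theorem restriction_bijective {n N : ℕ} (hn : 1 ≤ n)
    (r : Fin (N + 1) → ℝ) (A : Fin (N + 1) → ℝ → Matrix (Fin n) (Fin n) ℝ)
    (hr : DelaysOK r) (hA : CoeffOK A) (hAH : AsympHyperbolic r A)
    (p : ℝ≥0∞) (hp : 1 ≤ p)
    (hinj : ∀ x : ℝ → Fin n → ℝ, MemW1pW p x → SolvesNH r A x 0 → x = 0)
    (hsurj : ∀ h : ℝ → Fin n → ℝ, MemLpW p h → ∃ x, MemW1pW p x ∧ SolvesNH r A x h) :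
    ∀ s t : ℝ, s ≤ t →
      -- `T(t,s)` maps `F(s)` into `F(t)`
      (∀ φ ∈ Fset r A s, ∀ x : ℝ → Fin n → ℝ,
        IsSolFrom r A x s → Matches r x s φ → ∃ ψ ∈ Fset r A t, Matches r x t ψ) ∧
      -- `T(t,s)` is injective on `F(s)`
      (∀ φ φ' : C(Set.Icc (-(r (Fin.last N))) (0 : ℝ), Fin n → ℝ),
        φ ∈ Fset r A s → φ' ∈ Fset r A s →
        ∀ x x' : ℝ → Fin n → ℝ,
          IsSolFrom r A x s → Matches r x s φ →
          IsSolFrom r A x' s → Matches r x' s φ' →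
          (∀ θ : Set.Icc (-(r (Fin.last N))) (0 : ℝ), x (t + (θ : ℝ)) = x' (t + (θ : ℝ))) →
          φ = φ') ∧
      -- `T(t,s)` maps `F(s)` onto `F(t)`
      (∀ ψ ∈ Fset r A t, ∃ φ ∈ Fset r A s, ∃ x : ℝ → Fin n → ℝ,
        IsSolFrom r A x s ∧ Matches r x s φ ∧ Matches r x t ψ) := by
  obtain ⟨hr00, hrmono⟩ := hr
  obtain ⟨hm, β0, hβraw⟩ := hA
  have hr0 : ∀ j, 0 ≤ r j := fun j => by
    rw [← hr00]; exact hrmono.monotone (Fin.zero_le j)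
  have hrN : ∀ j, r j ≤ r (Fin.last N) := fun j => hrmono.monotone (Fin.le_last j)
  have hrN0 : 0 ≤ r (Fin.last N) := hr0 _
  set β := max β0 0 with hβdef
  have hβ0 : 0 ≤ β := le_max_right _ _
  have hβ : ∀ j t v, ‖(A j t).mulVec v‖ ≤ β * ‖v‖ := fun j t v =>
    le_trans (hβraw j t v) (mul_le_mul_of_nonneg_right (le_max_left _ _) (norm_nonneg v))
  intro s t hst
  refine ⟨?_, ?_, ?_⟩
  · -- maps into F(t)
    rintro φ ⟨v, hv, hvφ, Mv, hMv⟩ x hxs hxφ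
    obtain ⟨V, hVc, ⟨MV, hMV⟩, hVpast, hVmid, hVright, hVid⟩ :=
      glue hm hβ0 hβ hr0 hrN hst hv hvφ hMv hxs hxφ
    set ψ : C(Set.Icc (-(r (Fin.last N))) (0 : ℝ), Fin n → ℝ) :=
      ⟨fun θ => V (t + (θ : ℝ)), hVc.comp (continuous_const.add continuous_subtype_val)⟩
      with hψdef
    refine ⟨ψ, ⟨V, ⟨hVc.continuousOn,
      fun t₁ t₂ _ _ => intervalIntegrable_RHSf hm hβ0 hβ hr0 hrN hVc t₁ t₂,
      fun τ τ' hττ' hτ't => hVid τ τ' hττ' hτ't⟩,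
      fun θ => rfl, MV, fun τ _ => hMV τ⟩, fun θ => ?_⟩
    have hθ1 := θ.2.1
    have hθ2 := θ.2.2
    exact (hVmid (t + (θ : ℝ)) (by linarith) (by linarith)).symm
  · -- injective on F(s)
    rintro φ φ' ⟨v, hv, hvφ, Mv, hMv⟩ ⟨v', hv', hv'φ', Mv', hMv'⟩ x x' hxs hxφ hx's hx'φ' hseg
    obtain ⟨V, hVc, ⟨MV, hMV⟩, hVpast, hVmid, hVright, hVid⟩ :=
      glue hm hβ0 hβ hr0 hrN hst hv hvφ hMv hxs hxφ
    obtain ⟨V', hV'c, ⟨MV', hMV'⟩, hV'past, hV'mid, hV'right, hV'id⟩ :=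
      glue hm hβ0 hβ hr0 hrN hst hv' hv'φ' hMv' hx's hx'φ'
    set z : ℝ → Fin n → ℝ := fun τ => V τ - V' τ with hzdef
    have hzc : Continuous z := hVc.sub hV'c
    have hz0 : ∀ τ, t - r (Fin.last N) ≤ τ → z τ = 0 := by
      intro τ hτ
      rw [hzdef]
      rcases le_total τ t with h | h
      · have h1 : V τ = x τ := hVmid τ (by linarith) h
        have h2 : V' τ = x' τ := hV'mid τ (by linarith) h
        have h3 := hseg ⟨τ - t, ⟨by linarith, by linarith⟩⟩
        rw [show t + (τ - t) = τ by ring] at h3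
        simp only [h1, h2, h3, sub_self]
      · have h1 : V τ = x t := hVright τ h
        have h2 : V' τ = x' t := hV'right τ h
        have h3 := hseg ⟨0, ⟨by linarith, le_refl 0⟩⟩
        rw [add_zero] at h3
        simp only [h1, h2, h3, sub_self]
    have hzt : z t = 0 := hz0 t (by linarith)
    have hzbdd : ∀ τ, ‖z τ‖ ≤ MV + MV' := by
      intro τ
      rw [hzdef]
      exact le_trans (norm_sub_le _ _) (add_le_add (hMV τ) (hMV' τ))
    have hzint : ∀ a b : ℝ, IntervalIntegrable (RHSf r A z) volume a b :=
      intervalIntegrable_RHSf hm hβ0 hβ hr0 hrN hzc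
    have hVint : ∀ a b : ℝ, IntervalIntegrable (RHSf r A V) volume a b :=
      intervalIntegrable_RHSf hm hβ0 hβ hr0 hrN hVc
    have hV'int : ∀ a b : ℝ, IntervalIntegrable (RHSf r A V') volume a b :=
      intervalIntegrable_RHSf hm hβ0 hβ hr0 hrN hV'c
    have hq : ∀ τ, z τ = z t + ∫ σ in t..τ, RHSf r A z σ := by
      intro τ
      rcases le_total t τ with h | h
      · have hzero : ∫ σ in t..τ, RHSf r A z σ = 0 := by
          rw [intervalIntegral.integral_congr (g := fun _ => (0 : Fin n → ℝ))
            (fun σ hσ => ?_), intervalIntegral.integral_zero]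
          rw [Set.uIcc_of_le h] at hσ
          refine Finset.sum_eq_zero fun j _ => ?_
          have h1 : z (σ - r j) = 0 := by
            refine hz0 _ ?_
            have := hrN j
            have := hσ.1
            linarith
          rw [h1, Matrix.mulVec_zero]
        rw [hzero, hzt, hz0 τ (by linarith), add_zero]
      · have h1 : V t = V τ + ∫ σ in τ..t, RHSf r A V σ := hVid τ t h (le_refl t)
        have h2 : V' t = V' τ + ∫ σ in τ..t, RHSf r A V' σ := hV'id τ t h (le_refl t)
        have h3 : (∫ σ in τ..t, RHSf r A V σ) - (∫ σ in τ..t, RHSf r A V' σ)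
            = ∫ σ in τ..t, RHSf r A z σ := by
          rw [← intervalIntegral.integral_sub (hVint τ t) (hV'int τ t)]
          refine intervalIntegral.integral_congr fun σ _ => ?_
          rw [RHSf_sub]
        have h4 : ∫ σ in t..τ, RHSf r A z σ = -∫ σ in τ..t, RHSf r A z σ :=
          intervalIntegral.integral_symm τ t
        have hzτ : z τ = V τ - V' τ := rfl
        have hztt : z t = V t - V' t := rfl
        rw [hzτ, hztt, h4, ← h3, h1, h2]
        abel
    have hAC : ∀ a τ : ℝ, z τ = z a + ∫ σ in a..τ, RHSf r A z σ := by
      intro a τ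
      have hsub := intervalIntegral.integral_interval_sub_left (hzint t τ) (hzint t a)
      rw [hq τ, hq a, ← hsub]
      abel
    have hsolz : SolvesNH r A z 0 := by
      have heq : (fun τ => (∑ j, (A j τ).mulVec (z (τ - r j))) + (0 : ℝ → Fin n → ℝ) τ)
          = RHSf r A z := funext fun τ => by simp [RHSf]
      rw [SolvesNH, heq]
      exact ⟨hzint, hAC⟩
    have hmem : MemW1pW p z := by
      refine ⟨memLpW_of_bounded hp hzc.aestronglyMeasurable hzbdd, RHSf r A z,
        ⟨hzint, hAC⟩, memLpW_of_bounded hp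
          (measurable_RHSf hm hzc.measurable).aestronglyMeasurable
          (fun τ => norm_RHSf_le hβ0 hβ fun j => hzbdd _)⟩
    have hz := hinj z hmem hsolz
    have hVV' : ∀ τ, V τ = V' τ := by
      intro τ
      have := congrFun hz τ
      rw [hzdef] at this
      exact sub_eq_zero.mp this
    ext θ i
    have h1 := hvφ θ
    have h2 := hv'φ' θ
    have hθ2 := θ.2.2
    have e1 : V (s + (θ : ℝ)) = v (s + (θ : ℝ)) := hVpast _ (by linarith)
    have e2 : V' (s + (θ : ℝ)) = v' (s + (θ : ℝ)) := hV'past _ (by linarith)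
    have : φ θ = φ' θ := by rw [← h1, ← h2, ← e1, ← e2, hVV']
    rw [this]
  · -- onto F(t)
    rintro ψ ⟨v, hv, hvψ, Mv, hMv⟩
    set φ : C(Set.Icc (-(r (Fin.last N))) (0 : ℝ), Fin n → ℝ) :=
      ⟨fun θ => v (s + (θ : ℝ)),
        hv.1.comp_continuous (continuous_const.add continuous_subtype_val)
          (fun θ => by
            have := θ.2.2
            simp only [Set.mem_Iic]
            linarith)⟩ with hφdef
    have hφF : φ ∈ Fset r A s := by
      refine ⟨v, ⟨hv.1.mono (Set.Iic_subset_Iic.mpr hst),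
        fun t₁ t₂ h1 h2 => hv.2.1 t₁ t₂ (h1.trans hst) (h2.trans hst),
        fun τ τ' h1 h2 => hv.2.2 τ τ' h1 (h2.trans hst)⟩,
        fun θ => rfl, Mv, fun τ hτ => hMv τ (hτ.trans hst)⟩
    set H : ℝ → Fin n → ℝ := fun τ => v (min τ t) with hHdef
    have hH : Continuous H :=
      hv.1.comp_continuous (continuous_id.min continuous_const) fun τ =>
        Set.mem_Iic.mpr (min_le_right _ _)
    have hMH : ∀ τ, ‖H τ‖ ≤ Mv := fun τ => hMv _ (min_le_right _ _)
    obtain ⟨x, hxc, hxpast, hxid⟩ :=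
      exists_forward hm hβ0 hβ hr0 hrN H hH Mv hMH t
    have hxv : ∀ τ, τ ≤ t → x τ = v τ := by
      intro τ hτ
      rw [hxpast τ hτ, hHdef]
      simp [min_eq_left hτ]
    have hEq : ∀ σ, σ ≤ t → RHSf r A x σ = RHSf r A v σ := by
      intro σ hσ
      refine RHSf_congr fun j => hxv _ ?_
      have := hr0 j; linarith
    have hxint : ∀ t₁ t₂ : ℝ, IntervalIntegrable (RHSf r A x) volume t₁ t₂ :=
      intervalIntegrable_RHSf hm hβ0 hβ hr0 hrN hxc
    have hkey : ∀ τ, s ≤ τ → τ ≤ t → x τ = x s + ∫ σ in s..τ, RHSf r A x σ := by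
      intro τ h1 h2
      rw [hxv τ h2, hxv s hst, hv.2.2 s τ h1 h2]
      congr 1
      refine (intervalIntegral.integral_congr fun σ hσ => ?_).symm
      rw [Set.uIcc_of_le h1] at hσ
      exact hEq σ (le_trans hσ.2 h2)
    have hsolx : IsSolFrom r A x s := by
      refine ⟨hxc.continuousOn, fun t₁ t₂ _ _ => hxint t₁ t₂, fun τ hτ => ?_⟩
      rcases le_total τ t with h | h
      · exact hkey τ hτ h
      · have h1 : x τ = x t + ∫ σ in t..τ, RHSf r A x σ := hxid τ h
        have h2 : x t = x s + ∫ σ in s..t, RHSf r A x σ := hkey t hst (le_refl t)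
        rw [h1, h2, add_assoc,
          intervalIntegral.integral_add_adjacent_intervals (hxint s t) (hxint t τ)]
        rfl
    refine ⟨φ, hφF, x, hsolx, fun θ => ?_, fun θ => ?_⟩
    · have hθ2 := θ.2.2
      rw [hxv (s + (θ : ℝ)) (by linarith)]
      rfl
    · have hθ2 := θ.2.2
      rw [hxv (t + (θ : ℝ)) (by linarith)]
      exact hvψ θ
end
end

section
/- Assume the delay equation x'(t) = Σ_{j=0}^N A_j(t) x(t−r_j) is asymptotically hyperbolic and that Λ_L : W^{1,p}_μ → L^p_μ is bijective. Let P(s) : C → C be the projection onto E(s) along F(s) coming from the splitting C = E(s) ⊕ F(s). Set β = sup_{t∈ℝ} ‖L(t)‖ (operator norm C → ℝⁿ) and let c be a constant such that sup_{t∈ℝ}|(Λ_L⁻¹ h)(t)| ≤ c · sup_{t∈ℝ}|h(t)| for every bounded measurable h. Then the operator norm of P(s) satisfies ‖P(s)‖ ≤ γ₀ := cβ + 1 for every s ∈ ℝ. -/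
open MeasureTheory Filter Topology Set
open scoped ENNReal

noncomputable section

/-! ### Auxiliary lemmas -/

lemma muW_univ_lt_top : muW Set.univ < ⊤ := by
  rw [muW, withDensity_apply _ MeasurableSet.univ, Measure.restrict_univ]
  have h := integrable_inv_one_add_sq.2
  refine lt_of_eq_of_lt (lintegral_congr fun t => ?_) h
  rw [← Real.enorm_eq_ofReal (by positivity)]

lemma memLpW_of_bounded {E : Type*} [NormedAddCommGroup E] {p : ℝ≥0∞} (hp : 1 ≤ p)
    {f : ℝ → E} (hf : AEStronglyMeasurable f volume) {M : ℝ}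
    (hM : ∀ t, ‖f t‖ ≤ M) : MemLpW p f := by
  refine ⟨hf, ?_⟩
  unfold lpNormW
  split_ifs with hptop
  · refine lt_of_le_of_lt (essSup_le_of_ae_le (ENNReal.ofReal M)
      (Filter.Eventually.of_forall fun t => ?_)) ENNReal.ofReal_lt_top
    calc (‖f t‖₊ : ℝ≥0∞) * ENNReal.ofReal ((1 + t ^ 2)⁻¹)
        ≤ ENNReal.ofReal M * 1 := by
          gcongr
          · rw [← enorm_eq_nnnorm, ← ofReal_norm]
            exact ENNReal.ofReal_le_ofReal (hM t)
          · refine ENNReal.ofReal_le_one.2 ?_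
            rw [inv_le_one_iff₀]
            right; nlinarith [sq_nonneg t]
      _ = ENNReal.ofReal M := mul_one _
  · have hp0 : p ≠ 0 := fun h => by simp [h] at hp
    have hpt : 0 < p.toReal := ENNReal.toReal_pos hp0 hptop
    have hbig : (∫⁻ t, (‖f t‖₊ : ℝ≥0∞) ^ p.toReal ∂muW)
        ≤ (ENNReal.ofReal M) ^ p.toReal * muW Set.univ := by
      calc (∫⁻ t, (‖f t‖₊ : ℝ≥0∞) ^ p.toReal ∂muW)
          ≤ ∫⁻ _, (ENNReal.ofReal M) ^ p.toReal ∂muW := by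
            refine lintegral_mono fun t => ?_
            refine ENNReal.rpow_le_rpow ?_ hpt.le
            rw [← enorm_eq_nnnorm, ← ofReal_norm]
            exact ENNReal.ofReal_le_ofReal (hM t)
        _ = (ENNReal.ofReal M) ^ p.toReal * muW Set.univ := lintegral_const _
    refine ENNReal.rpow_lt_top_of_nonneg (by positivity) ?_
    refine (lt_of_le_of_lt hbig ?_).ne
    exact ENNReal.mul_lt_top
      (ENNReal.rpow_lt_top_of_nonneg hpt.le ENNReal.ofReal_ne_top) muW_univ_lt_top

lemma intervalIntegrable_of_bounded {E : Type*} [NormedAddCommGroup E]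
    {f : ℝ → E} (hf : AEStronglyMeasurable f volume) {M : ℝ}
    (hM : ∀ t, ‖f t‖ ≤ M) (a b : ℝ) : IntervalIntegrable f volume a b := by
  rw [intervalIntegrable_iff]
  refine Measure.integrableOn_of_bounded ?_ hf (Filter.Eventually.of_forall hM)
  rw [Set.uIoc, Real.volume_Ioc]
  exact ENNReal.ofReal_ne_top

/-- The projections `P(s)` of the splitting `C = E(s) ⊕ F(s)` satisfy the
uniform bound `‖P(s)‖ ≤ γ₀ = cβ + 1`. -/
theorem projection_bound {n N : ℕ} (hn : 1 ≤ n)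
    (r : Fin (N + 1) → ℝ) (A : Fin (N + 1) → ℝ → Matrix (Fin n) (Fin n) ℝ)
    (hr : DelaysOK r) (hA : CoeffOK A) (hAH : AsympHyperbolic r A)
    (p : ℝ≥0∞) (hp : 1 ≤ p)
    (hinj : ∀ x : ℝ → Fin n → ℝ, MemW1pW p x → SolvesNH r A x 0 → x = 0)
    (hsurj : ∀ h : ℝ → Fin n → ℝ, MemLpW p h → ∃ x, MemW1pW p x ∧ SolvesNH r A x h)
    (β c : ℝ)
    -- `β = sup_t ‖L(t)‖`
    (hβ : ∀ (t : ℝ) (v : Fin (N + 1) → Fin n → ℝ) (M : ℝ), (∀ j, ‖v j‖ ≤ M) →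
      ‖∑ j, (A j t).mulVec (v j)‖ ≤ β * M)
    -- `sup_t |(Λ_L⁻¹ h)(t)| ≤ c · sup_t |h(t)|` for bounded measurable `h`
    (hc : ∀ (x h : ℝ → Fin n → ℝ) (M : ℝ), MemW1pW p x → SolvesNH r A x h →
      (∀ t, ‖h t‖ ≤ M) → ∀ t, ‖x t‖ ≤ c * M) :
    ∀ (s : ℝ) (φ φE φF : C(Set.Icc (-(r (Fin.last N))) (0 : ℝ), Fin n → ℝ)),
      φE ∈ Eset r A s → φF ∈ Fset r A s → φ = φE + φF →
      ‖φE‖ ≤ (c * β + 1) * ‖φ‖ := by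
  intro s φ φE φF hE hF hφ
  obtain ⟨x, hxSol, hxM, Mx, hMx⟩ := hE
  obtain ⟨w, hwSol, hwM, Mw, hMw⟩ := hF
  -- basic facts about the delays
  have hrj0 : ∀ j, (0:ℝ) ≤ r j := by
    intro j
    have h := hr.2.monotone (Fin.zero_le j)
    rw [hr.1] at h; exact h
  have hrjN : ∀ j, r j ≤ r (Fin.last N) := fun j => hr.2.monotone (Fin.le_last j)
  have hr0 : (0:ℝ) ≤ r (Fin.last N) := hrj0 _
  have h0mem : (0:ℝ) ∈ Set.Icc (-(r (Fin.last N))) (0:ℝ) := ⟨by linarith, le_refl 0⟩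
  set φ0 : Fin n → ℝ := φ ⟨0, h0mem⟩ with hφ0def
  have hφ0n : ‖φ0‖ ≤ ‖φ‖ := φ.norm_coe_le_norm _
  -- values of x and w on the initial segment
  have hxs : x s = φE ⟨0, h0mem⟩ := by
    have h := hxM ⟨0, h0mem⟩
    simpa using h
  have hws : w s = φF ⟨0, h0mem⟩ := by
    have h := hwM ⟨0, h0mem⟩
    simpa using h
  have key0 : x s + w s = φ0 := by
    rw [hxs, hws, hφ0def, hφ]; rfl
  -- the glued function u
  set u : ℝ → Fin n → ℝ := fun t => w (min t s) - w s - x (max t s) + φ0 with hudef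
  have hu_le : ∀ t, t ≤ s → u t = w t := by
    intro t ht
    simp only [hudef, min_eq_left ht, max_eq_right ht]
    rw [sub_sub, add_comm (w s) (x s), key0]
    abel
  have hu_ge : ∀ t, s ≤ t → u t = φ0 - x t := by
    intro t ht
    simp only [hudef, min_eq_right ht, max_eq_left ht]
    abel
  -- continuity and boundedness of u
  have hwc := hwSol.1
  have hxc := hxSol.1
  have hucont : Continuous u := by
    refine (((hwc.comp_continuous (continuous_id.min continuous_const)
      fun t => min_le_right t s).sub continuous_const).sub
      (hxc.comp_continuous (continuous_id.max continuous_const)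
      fun t => ?_)).add continuous_const
    exact Set.mem_Ici.2 (le_trans (by linarith) (le_max_right t s))
  have hubnd : ∀ t, ‖u t‖ ≤ Mw + Mw + Mx + ‖φ‖ := by
    intro t
    have h1 : ‖w (min t s)‖ ≤ Mw := hMw _ (min_le_right t s)
    have h2 : ‖w s‖ ≤ Mw := hMw s le_rfl
    have h3 : ‖x (max t s)‖ ≤ Mx :=
      hMx _ (le_trans (by linarith) (le_max_right t s))
    have h4 := norm_add_le (w (min t s) - w s - x (max t s)) φ0
    have h5 := norm_sub_le (w (min t s) - w s) (x (max t s))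
    have h6 := norm_sub_le (w (min t s)) (w s)
    simp only [hudef]
    linarith
  -- the derivative g of u
  set g : ℝ → Fin n → ℝ := fun t =>
    if t ≤ s then ∑ j, (A j t).mulVec (w (min (t - r j) s))
    else -∑ j, (A j t).mulVec (x (max (t - r j) (s - r (Fin.last N)))) with hgdef
  have hmes : ∀ (y : Fin (N+1) → ℝ → Fin n → ℝ), (∀ j, Continuous (y j)) →
      Measurable fun t => ∑ j, (A j t).mulVec (y j t) := by
    intro y hy
    refine Finset.measurable_sum _ fun j _ => ?_
    refine measurable_pi_lambda _ fun i => ?_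
    simp only [Matrix.mulVec, dotProduct]
    exact Finset.measurable_sum _ fun k _ =>
      (hA.1 j i k).mul ((continuous_apply k).comp (hy j)).measurable
  have hgmes : AEStronglyMeasurable g volume := by
    have m1 : Measurable fun t => ∑ j, (A j t).mulVec (w (min (t - r j) s)) := by
      refine hmes _ fun j => ?_
      exact hwc.comp_continuous ((continuous_id.sub continuous_const).min continuous_const)
        fun t => Set.mem_Iic.2 (min_le_right _ _)
    have m2 : Measurable fun t =>
        ∑ j, (A j t).mulVec (x (max (t - r j) (s - r (Fin.last N)))) := by
      refine hmes _ fun j => ?_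
      exact hxc.comp_continuous ((continuous_id.sub continuous_const).max continuous_const)
        fun t => Set.mem_Ici.2 (le_max_right _ _)
    exact (Measurable.ite measurableSet_Iic m1 m2.neg).aestronglyMeasurable
  have hgbnd : ∀ t, ‖g t‖ ≤ max (β * Mw) (β * Mx) := by
    intro t
    simp only [hgdef]
    split_ifs with ht
    · exact le_trans (hβ t _ Mw fun j => hMw _ (min_le_right _ _)) (le_max_left _ _)
    · rw [norm_neg]
      exact le_trans (hβ t _ Mx fun j => hMx _ (le_max_right _ _)) (le_max_right _ _)
  have hg_le : ∀ t, t ≤ s → g t = ∑ j, (A j t).mulVec (w (t - r j)) := by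
    intro t ht
    simp only [hgdef, if_pos ht]
    refine Finset.sum_congr rfl fun j _ => ?_
    rw [min_eq_left (by have := hrj0 j; linarith)]
  have hg_gt : ∀ t, s < t → g t = -∑ j, (A j t).mulVec (x (t - r j)) := by
    intro t ht
    simp only [hgdef, if_neg (not_le.2 ht)]
    congr 1
    refine Finset.sum_congr rfl fun j _ => ?_
    rw [max_eq_left (by have := hrjN j; linarith)]
  -- u has g as AC derivative
  have hIg : ∀ a b : ℝ, IntervalIntegrable g volume a b :=
    intervalIntegrable_of_bounded hgmes hgbnd
  have hukey : ∀ t, u t = u s + ∫ σ in s..t, g σ := by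
    intro t
    rcases le_total t s with ht | ht
    · have hEq : Set.EqOn g (fun σ => ∑ j, (A j σ).mulVec (w (σ - r j))) (Set.uIcc t s) := by
        intro σ hσ
        rw [Set.uIcc_of_le ht] at hσ
        exact hg_le σ hσ.2
      have h1 : ∫ σ in t..s, g σ = w s - w t := by
        rw [intervalIntegral.integral_congr hEq]
        have h2 := hwSol.2.2 t s ht le_rfl
        rw [h2]; abel
      rw [hu_le t ht, hu_le s le_rfl, intervalIntegral.integral_symm t s, h1]
      abel
    · have hEq : ∀ᵐ σ ∂(volume : Measure ℝ), σ ∈ Set.uIoc s t →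
          g σ = -(∑ j, (A j σ).mulVec (x (σ - r j))) := by
        refine Filter.Eventually.of_forall fun σ hσ => ?_
        rw [Set.uIoc_of_le ht] at hσ
        exact hg_gt σ hσ.1
      have h1 : ∫ σ in s..t, g σ = x s - x t := by
        rw [intervalIntegral.integral_congr_ae hEq, intervalIntegral.integral_neg]
        have h2 := hxSol.2.2 t ht
        rw [h2]; abel
      rw [hu_ge t ht, hu_ge s le_rfl, h1]
      abel
  have hAC : HasACDeriv u g := by
    refine ⟨hIg, fun a t => ?_⟩
    have h3 : ∫ σ in a..t, g σ = (∫ σ in a..s, g σ) + ∫ σ in s..t, g σ :=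
      (intervalIntegral.integral_add_adjacent_intervals (hIg a s) (hIg s t)).symm
    have h4 : ∫ σ in a..s, g σ = -∫ σ in s..a, g σ := intervalIntegral.integral_symm s a
    rw [h3, h4, hukey t, hukey a]
    abel
  have huW : MemW1pW p u :=
    ⟨memLpW_of_bounded hp hucont.aestronglyMeasurable hubnd,
     g, hAC, memLpW_of_bounded hp hgmes hgbnd⟩
  -- the forcing term
  set hh : ℝ → Fin n → ℝ := fun t => g t - ∑ j, (A j t).mulVec (u (t - r j)) with hhdef
  have hSolves : SolvesNH r A u hh := by
    have heq : (fun t => (∑ j, (A j t).mulVec (u (t - r j))) + hh t) = g := by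
      funext t; simp only [hhdef]; abel
    rw [SolvesNH, heq]; exact hAC
  have hβφ : (0:ℝ) ≤ β * ‖φ‖ := by
    refine le_trans (norm_nonneg _) (hβ 0 (fun _ => 0) ‖φ‖ fun j => ?_)
    rw [norm_zero]; exact norm_nonneg φ
  have hhbnd : ∀ t, ‖hh t‖ ≤ β * ‖φ‖ := by
    intro t
    rcases le_or_gt t s with ht | ht
    · have hz : hh t = 0 := by
        simp only [hhdef, hg_le t ht]
        rw [sub_eq_zero]
        refine Finset.sum_congr rfl fun j _ => ?_
        rw [hu_le _ (by have := hrj0 j; linarith)]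
      rw [hz, norm_zero]; exact hβφ
    · have hrepr : hh t = ∑ j, (A j t).mulVec (-(x (t - r j) + u (t - r j))) := by
        simp only [hhdef, hg_gt t ht, Matrix.mulVec_neg, Matrix.mulVec_add,
          Finset.sum_neg_distrib, Finset.sum_add_distrib]
        abel
      rw [hrepr]
      refine hβ t _ ‖φ‖ fun j => ?_
      rw [norm_neg]
      rcases le_or_gt (t - r j) s with hts | hts
      · have hθmem : t - r j - s ∈ Set.Icc (-(r (Fin.last N))) (0:ℝ) :=
          ⟨by have := hrjN j; linarith, by linarith⟩
        have hx' : x (t - r j) = φE ⟨t - r j - s, hθmem⟩ := by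
          have h := hxM ⟨t - r j - s, hθmem⟩
          rwa [show s + (t - r j - s) = t - r j by ring] at h
        have hw' : w (t - r j) = φF ⟨t - r j - s, hθmem⟩ := by
          have h := hwM ⟨t - r j - s, hθmem⟩
          rwa [show s + (t - r j - s) = t - r j by ring] at h
        rw [hu_le _ hts, hx', hw',
          show φE ⟨t - r j - s, hθmem⟩ + φF ⟨t - r j - s, hθmem⟩
            = φ ⟨t - r j - s, hθmem⟩ by rw [hφ]; rfl]
        exact φ.norm_coe_le_norm _
      · rw [hu_ge _ hts.le, show x (t - r j) + (φ0 - x (t - r j)) = φ0 by abel]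
        exact hφ0n
  -- apply the a priori bound
  have hub : ∀ t, ‖u t‖ ≤ c * (β * ‖φ‖) := hc u hh (β * ‖φ‖) huW hSolves hhbnd
  have hφF : ‖φF‖ ≤ c * (β * ‖φ‖) := by
    rw [ContinuousMap.norm_le _ (le_trans (norm_nonneg (u s)) (hub s))]
    intro θ
    have h2 : s + (θ:ℝ) ≤ s := by have := θ.2.2; linarith
    calc ‖φF θ‖ = ‖u (s + (θ:ℝ))‖ := by rw [← hwM θ, hu_le _ h2]
      _ ≤ c * (β * ‖φ‖) := hub _
  have hφE : φE = φ - φF := by rw [hφ]; abel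
  rw [hφE]
  calc ‖φ - φF‖ ≤ ‖φ‖ + ‖φF‖ := norm_sub_le _ _
    _ ≤ ‖φ‖ + c * (β * ‖φ‖) := by linarith
    _ = (c * β + 1) * ‖φ‖ := by ring
end
end
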